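/- arXiv:1907.11303 — 2 statements merged into one kernel-verified Lean document; each statement's English description precedes it below -/
import Mathlib

section
/- Let n ≥ 5. There exist ε₀ > 0 and a constant C > 0 depending only on n and ε₀ such that for every p on the critical hyperbola with |p − 1| ≤ ε₀ and q = q(p), the ground state (U_p, V_p) satisfies U_p(x) ≤ 1 and V_p(x) ≤ C for all x ∈ ℝⁿ. -/
open Filter MeasureTheory Topology

noncomputable def lap {n : ℕ} (f : EuclideanSpace ℝ (Fin n) → ℝ)
    (x : EuclideanSpace ℝ (Fin n)) : ℝ :=
  ∑ i, fderiv ℝ (fderiv ℝ f) x (EuclideanSpace.single i 1) (EuclideanSpace.single i 1)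

section
variable {n : ℕ} {U : EuclideanSpace ℝ (Fin n) → ℝ}

lemma norm_smul_single (i : Fin n) (s : ℝ) : ‖s • EuclideanSpace.single i (1:ℝ)‖ = |s| := by
  rw [norm_smul, EuclideanSpace.norm_single]
  simp [Real.norm_eq_abs]

lemma norm_combo {i j : Fin n} (hij : i ≠ j) (s t : ℝ) :
    ‖s • EuclideanSpace.single i (1:ℝ) + t • EuclideanSpace.single j (1:ℝ)‖
      = Real.sqrt (s ^ 2 + t ^ 2) := by
  have h2 : ‖s • EuclideanSpace.single i (1:ℝ) + t • EuclideanSpace.single j (1:ℝ)‖ ^ 2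
      = s ^ 2 + t ^ 2 := by
    rw [norm_add_sq_real]
    have hinner : inner ℝ (s • EuclideanSpace.single i (1:ℝ))
        (t • EuclideanSpace.single j (1:ℝ)) = (0:ℝ) := by
      rw [real_inner_smul_left, real_inner_smul_right, EuclideanSpace.inner_single_left]
      simp [EuclideanSpace.single_apply, hij]
    rw [hinner, norm_smul_single, norm_smul_single]
    simp [sq_abs]
  rw [← h2, Real.sqrt_sq (norm_nonneg _)]

lemma lineHasDerivAt (hU : ContDiff ℝ 2 U) (a b : EuclideanSpace ℝ (Fin n)) (t : ℝ) :
    HasDerivAt (fun s => U (a + s • b)) (fderiv ℝ U (a + t • b) b) t := by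
  have hc : HasDerivAt (fun s : ℝ => a + s • b) b t := by
    simpa using ((hasDerivAt_id t).smul_const b).const_add a
  have hd : DifferentiableAt ℝ U (a + t • b) :=
    (hU.differentiable (by norm_num)).differentiableAt
  have := hd.hasFDerivAt.comp_hasDerivAt t hc
  exact this

lemma lineHasDerivAt2 (hU : ContDiff ℝ 2 U) (a b : EuclideanSpace ℝ (Fin n)) (t : ℝ) :
    HasDerivAt (fun s => fderiv ℝ U (a + s • b) b)
      (fderiv ℝ (fderiv ℝ U) (a + t • b) b b) t := by
  have hΦ : ContDiff ℝ 1 (fderiv ℝ U) := hU.fderiv_right (by norm_num)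
  have hc : HasDerivAt (fun s : ℝ => a + s • b) b t := by
    simpa using ((hasDerivAt_id t).smul_const b).const_add a
  have h1 : HasDerivAt (fun s : ℝ => fderiv ℝ U (a + s • b))
      (fderiv ℝ (fderiv ℝ U) (a + t • b) b) t :=
    ((hΦ.differentiable (by norm_num)).differentiableAt).hasFDerivAt.comp_hasDerivAt t hc
  have := h1.clm_apply (hasDerivAt_const t b)
  simpa using this

lemma radial_eq (hmono : ∀ x y, ‖x‖ ≤ ‖y‖ → U y ≤ U x) (i0 : Fin n)
    (y : EuclideanSpace ℝ (Fin n)) :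
    U y = (fun r : ℝ => U (r • EuclideanSpace.single i0 (1:ℝ))) ‖y‖ := by
  have hn : ‖(‖y‖ : ℝ) • EuclideanSpace.single i0 (1:ℝ)‖ = ‖y‖ := by
    rw [norm_smul_single, abs_of_nonneg (norm_nonneg _)]
  exact le_antisymm (hmono _ _ (le_of_eq hn)) (hmono _ _ (le_of_eq hn.symm))

lemma contDiff_radial_profile (hU : ContDiff ℝ 2 U) (i0 : Fin n) :
    ContDiff ℝ 2 (fun r : ℝ => U (r • EuclideanSpace.single i0 (1:ℝ))) :=
  hU.comp (contDiff_id.smul contDiff_const)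

/-- the transverse second derivative identity -/
lemma transverse_second (hU : ContDiff ℝ 2 U) (hmono : ∀ x y, ‖x‖ ≤ ‖y‖ → U y ≤ U x)
    {i0 i : Fin n} (hi : i ≠ i0) {s : ℝ} (hs : 0 < s) :
    fderiv ℝ (fderiv ℝ U) (s • EuclideanSpace.single i0 (1:ℝ))
        (EuclideanSpace.single i (1:ℝ)) (EuclideanSpace.single i (1:ℝ))
      = deriv (fun r : ℝ => U (r • EuclideanSpace.single i0 (1:ℝ))) s / s := by
  set e0 : EuclideanSpace ℝ (Fin n) := EuclideanSpace.single i0 (1:ℝ) with he0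
  set e1 : EuclideanSpace ℝ (Fin n) := EuclideanSpace.single i (1:ℝ) with he1
  set f : ℝ → ℝ := fun r : ℝ => U (r • e0) with hf
  have hfC : ContDiff ℝ 2 f := contDiff_radial_profile hU i0
  set a : EuclideanSpace ℝ (Fin n) := s • e0 with ha
  -- ψ := U along transverse line; its deriv is the fderiv pairing
  have hpsi : (fun t : ℝ => fderiv ℝ U (a + t • e1) e1)
      = fun t => deriv (fun t' : ℝ => U (a + t' • e1)) t := by
    funext t; exact ((lineHasDerivAt hU a e1 t).deriv).symm
  have hrad : (fun t' : ℝ => U (a + t' • e1))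
      = fun t' : ℝ => f (Real.sqrt (s ^ 2 + t' ^ 2)) := by
    funext t'
    rw [radial_eq hmono i0 (a + t' • e1), ha, norm_combo (Ne.symm hi)]
  -- deriv of f ∘ ρ
  have hrho : ∀ t : ℝ, HasDerivAt (fun t' : ℝ => Real.sqrt (s ^ 2 + t' ^ 2))
      (t / Real.sqrt (s ^ 2 + t ^ 2)) t := by
    intro t
    have hpos : (0:ℝ) < s ^ 2 + t ^ 2 := by positivity
    have h1 : HasDerivAt (fun t' : ℝ => s ^ 2 + t' ^ 2) (2 * t) t := by
      simpa using ((hasDerivAt_pow 2 t).const_add (s ^ 2))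
    have := (Real.hasDerivAt_sqrt (ne_of_gt hpos)).comp t h1
    refine this.congr_deriv ?_
    field_simp
  have hfd : ∀ r : ℝ, HasDerivAt f (deriv f r) r :=
    fun r => ((hfC.differentiable (by norm_num)).differentiableAt).hasDerivAt
  have hderiv_comp : ∀ t : ℝ,
      HasDerivAt (fun t' : ℝ => f (Real.sqrt (s ^ 2 + t' ^ 2)))
        (deriv f (Real.sqrt (s ^ 2 + t ^ 2)) * (t / Real.sqrt (s ^ 2 + t ^ 2))) t :=
    fun t => (hfd _).comp t (hrho t)
  -- so deriv ψ = (deriv f ∘ ρ) * (t/ρ)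
  have hpsideriv : (fun t : ℝ => fderiv ℝ U (a + t • e1) e1)
      = fun t => deriv f (Real.sqrt (s ^ 2 + t ^ 2)) * (t / Real.sqrt (s ^ 2 + t ^ 2)) := by
    rw [hpsi]
    funext t
    rw [hrad]
    exact (hderiv_comp t).deriv
  -- now compute second derivative at 0
  have hmain := lineHasDerivAt2 hU a e1 0
  simp only [zero_smul, add_zero] at hmain
  have h2 : deriv (fun t : ℝ => fderiv ℝ U (a + t • e1) e1) 0
      = fderiv ℝ (fderiv ℝ U) a e1 e1 := hmain.deriv
  rw [← h2, hpsideriv]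
  -- derivative at 0 of t ↦ deriv f (ρ t) * (t / ρ t)
  have hs0 : Real.sqrt (s ^ 2 + 0 ^ 2) = s := by
    simp [Real.sqrt_sq hs.le]
  have hdf : ContDiff ℝ 1 (deriv f) := by
    have : (2 : WithTop ℕ∞) = 1 + 1 := by norm_num
    rw [this] at hfC
    exact (contDiff_succ_iff_deriv.mp hfC).2.2
  have hA : HasDerivAt (fun t : ℝ => deriv f (Real.sqrt (s ^ 2 + t ^ 2)))
      (deriv (deriv f) s * (0 / s)) 0 := by
    have := (((hdf.differentiable (by norm_num)).differentiableAt).hasDerivAt).comp 0 (hrho 0)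
    refine this.congr_deriv ?_
    simp [hs0]
  have hB : HasDerivAt (fun t : ℝ => t / Real.sqrt (s ^ 2 + t ^ 2)) (1 / s) 0 := by
    have hnum : HasDerivAt (fun t : ℝ => t) 1 0 := hasDerivAt_id 0
    have hden : HasDerivAt (fun t : ℝ => Real.sqrt (s ^ 2 + t ^ 2)) (0 / s) 0 := by
      simpa [hs0] using hrho 0
    have hden0 : Real.sqrt (s ^ 2 + 0 ^ 2) ≠ 0 := by rw [hs0]; exact hs.ne'
    have := hnum.div hden hden0
    simp only [hs0] at this
    refine this.congr_deriv ?_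
    field_simp
    ring
  have := hA.mul hB
  have hval := this.deriv
  rw [show (fun t : ℝ => deriv f (Real.sqrt (s ^ 2 + t ^ 2)) * (t / Real.sqrt (s ^ 2 + t ^ 2))) = ((fun t : ℝ => deriv f (Real.sqrt (s ^ 2 + t ^ 2))) * fun t : ℝ => t / Real.sqrt (s ^ 2 + t ^ 2)) from rfl, hval]
  simp [hs0]
  rw [Real.sqrt_sq hs.le]
  ring
end

section lap2
variable {n : ℕ} {U : EuclideanSpace ℝ (Fin n) → ℝ}

lemma axial_second (hU : ContDiff ℝ 2 U) (i0 : Fin n) (s : ℝ) :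
    fderiv ℝ (fderiv ℝ U) (s • EuclideanSpace.single i0 (1:ℝ))
        (EuclideanSpace.single i0 (1:ℝ)) (EuclideanSpace.single i0 (1:ℝ))
      = deriv (deriv (fun r : ℝ => U (r • EuclideanSpace.single i0 (1:ℝ)))) s := by
  set e0 : EuclideanSpace ℝ (Fin n) := EuclideanSpace.single i0 (1:ℝ) with he0
  have hd1 : deriv (fun r : ℝ => U (r • e0)) = fun r : ℝ => fderiv ℝ U (r • e0) e0 := by
    funext r
    have := lineHasDerivAt hU 0 e0 r
    simp only [zero_add] at this
    exact this.deriv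
  rw [hd1]
  have := lineHasDerivAt2 hU 0 e0 s
  simp only [zero_add] at this
  exact this.deriv.symm

lemma lap_radial (hU : ContDiff ℝ 2 U) (hmono : ∀ x y, ‖x‖ ≤ ‖y‖ → U y ≤ U x)
    (i0 : Fin n) {s : ℝ} (hs : 0 < s) :
    lap U (s • EuclideanSpace.single i0 (1:ℝ))
      = deriv (deriv (fun r : ℝ => U (r • EuclideanSpace.single i0 (1:ℝ)))) s
        + ((n : ℝ) - 1) * (deriv (fun r : ℝ => U (r • EuclideanSpace.single i0 (1:ℝ))) s / s) := by
  classical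
  unfold lap
  rw [← Finset.sum_erase_add _ _ (Finset.mem_univ i0)]
  rw [axial_second hU i0 s]
  have hsum : ∑ i ∈ Finset.univ.erase i0,
      fderiv ℝ (fderiv ℝ U) (s • EuclideanSpace.single i0 (1:ℝ))
        (EuclideanSpace.single i (1:ℝ)) (EuclideanSpace.single i (1:ℝ))
      = ((n : ℝ) - 1) * (deriv (fun r : ℝ => U (r • EuclideanSpace.single i0 (1:ℝ))) s / s) := by
    rw [Finset.sum_congr rfl (fun i hi => transverse_second hU hmono (Finset.ne_of_mem_erase hi) hs)]
    rw [Finset.sum_const, Finset.card_erase_of_mem (Finset.mem_univ i0)]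
    have hcard : (Finset.univ : Finset (Fin n)).card = n := by simp
    rw [hcard, nsmul_eq_mul]
    have hn1 : 1 ≤ n := Fin.pos i0
    rw [Nat.cast_sub hn1]
    norm_num
  rw [hsum]
  ring
end lap2

lemma mono_of_hasDeriv {F : ℝ → ℝ} {a b : ℝ} (hab : a ≤ b)
    (hcont : ContinuousOn F (Set.Icc a b))
    (hder : ∀ r ∈ Set.Ioo a b, ∃ d, 0 ≤ d ∧ HasDerivAt F d r) :
    F a ≤ F b := by
  have h := monotoneOn_of_deriv_nonneg (convex_Icc a b) hcont ?_ ?_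
  · exact h (Set.left_mem_Icc.2 hab) (Set.right_mem_Icc.2 hab) hab
  · rw [interior_Icc]; intro r hr
    obtain ⟨d, _, hd⟩ := hder r hr
    exact hd.differentiableAt.differentiableWithinAt
  · rw [interior_Icc]; intro r hr
    obtain ⟨d, hd0, hd⟩ := hder r hr
    rw [hd.deriv]; exact hd0

lemma anti_of_hasDeriv {F : ℝ → ℝ} {a b : ℝ} (hab : a ≤ b)
    (hcont : ContinuousOn F (Set.Icc a b))
    (hder : ∀ r ∈ Set.Ioo a b, ∃ d, d ≤ 0 ∧ HasDerivAt F d r) :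
    F b ≤ F a := by
  have h := antitoneOn_of_deriv_nonpos (convex_Icc a b) hcont ?_ ?_
  · exact h (Set.left_mem_Icc.2 hab) (Set.right_mem_Icc.2 hab) hab
  · rw [interior_Icc]; intro r hr
    obtain ⟨d, _, hd⟩ := hder r hr
    exact hd.differentiableAt.differentiableWithinAt
  · rw [interior_Icc]; intro r hr
    obtain ⟨d, hd0, hd⟩ := hder r hr
    rw [hd.deriv]; exact hd0

lemma deriv_contDiff_one {f : ℝ → ℝ} (hf : ContDiff ℝ 2 f) : ContDiff ℝ 1 (deriv f) := by
  rw [show (2 : WithTop ℕ∞) = 1 + 1 by norm_num] at hf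
  exact (contDiff_succ_iff_deriv.mp hf).2.2

lemma divergence_form {l : ℕ} {f : ℝ → ℝ} (hfC : ContDiff ℝ 2 f) (h : ℝ → ℝ)
    {s : ℝ} (hs : 0 < s)
    (hlap : deriv (deriv f) s = -h s - ((l : ℝ) + 1) * (deriv f s / s)) :
    HasDerivAt (fun r => r ^ (l + 1) * deriv f r) (-(s ^ (l + 1) * h s)) s := by
  have hdf : Differentiable ℝ (deriv f) := (deriv_contDiff_one hfC).differentiable (by norm_num)
  have h1 : HasDerivAt (fun r => r ^ (l + 1) * deriv f r)
      ((↑(l + 1) * s ^ (l + 1 - 1)) * deriv f s + s ^ (l + 1) * deriv (deriv f) s) s :=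
    (hasDerivAt_pow (l + 1) s).mul (hdf s).hasDerivAt
  convert h1 using 1
  rw [hlap]
  simp only [Nat.add_sub_cancel]
  push_cast
  field_simp
  ring

set_option maxHeartbeats 1000000 in
lemma main_bound {n : ℕ} (hn : 5 ≤ n) {p q : ℝ} (hp : 1/2 ≤ p) (hq : 0 < q)
    {U V : EuclideanSpace ℝ (Fin n) → ℝ}
    (hU : ContDiff ℝ 2 U) (hV : ContDiff ℝ 2 V)
    (hUpos : ∀ x, 0 < U x) (hVpos : ∀ x, 0 < V x)
    (heq1 : ∀ x, -lap U x = V x ^ p) (heq2 : ∀ x, -lap V x = U x ^ q)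
    (hUmono : ∀ x y, ‖x‖ ≤ ‖y‖ → U y ≤ U x) (hVmono : ∀ x y, ‖x‖ ≤ ‖y‖ → V y ≤ V x)
    (hU0 : U 0 = 1) :
    V 0 < 2 * ((n : ℝ) * 2 ^ n) ^ 2 := by
  have hp0 : (0:ℝ) < p := lt_of_lt_of_le (by norm_num) hp
  obtain ⟨l, rfl⟩ : ∃ l, n = l + 2 := ⟨n - 2, by omega⟩
  set i0 : Fin (l + 2) := ⟨0, by omega⟩ with hi0
  set e0 : EuclideanSpace ℝ (Fin (l + 2)) := EuclideanSpace.single i0 (1:ℝ) with he0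
  set f : ℝ → ℝ := fun r => U (r • e0) with hfdef
  set g : ℝ → ℝ := fun r => V (r • e0) with hgdef
  have hfC : ContDiff ℝ 2 f := contDiff_radial_profile hU i0
  have hgC : ContDiff ℝ 2 g := contDiff_radial_profile hV i0
  have hdfC : ContDiff ℝ 1 (deriv f) := deriv_contDiff_one hfC
  have hdgC : ContDiff ℝ 1 (deriv g) := deriv_contDiff_one hgC
  obtain ⟨g0, hg0def⟩ : ∃ z : ℝ, z = V 0 := ⟨_, rfl⟩
  have hg0pos : 0 < g0 := by rw [hg0def]; exact hVpos 0
  have hg00 : g 0 = g0 := by rw [hgdef, hg0def]; simp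
  have hf0 : f 0 = 1 := by rw [hfdef]; simp [hU0]
  have hfpos : ∀ r, 0 < f r := fun r => hUpos _
  have hgpos : ∀ r, 0 < g r := fun r => hVpos _
  have hfle1 : ∀ r, f r ≤ 1 := by
    intro r
    rw [← hU0, hfdef]
    exact hUmono 0 (r • e0) (by simp)
  have hf1q : ∀ r, f r ^ q ≤ 1 := fun r => Real.rpow_le_one (hfpos r).le (hfle1 r) hq.le
  -- the ODEs in divergence form
  have hodeF : ∀ s : ℝ, 0 < s →
      HasDerivAt (fun r => r ^ (l + 1) * deriv f r) (-(s ^ (l + 1) * g s ^ p)) s := by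
    intro s hs
    apply divergence_form hfC (fun r => g r ^ p) hs
    have hl := lap_radial hU hUmono i0 hs
    have he := heq1 (s • e0)
    rw [← he0, ← hfdef] at hl
    have hgs : V (s • e0) = g s := rfl
    rw [hgs] at he
    have hcast : ((l + 2 : ℕ) : ℝ) - 1 = (l : ℝ) + 1 := by push_cast; ring
    rw [hcast] at hl
    linarith [hl, he]
  have hodeG : ∀ s : ℝ, 0 < s →
      HasDerivAt (fun r => r ^ (l + 1) * deriv g r) (-(s ^ (l + 1) * f s ^ q)) s := by
    intro s hs
    apply divergence_form hgC (fun r => f r ^ q) hs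
    have hl := lap_radial hV hVmono i0 hs
    have he := heq2 (s • e0)
    rw [← he0, ← hgdef] at hl
    have hfs : U (s • e0) = f s := rfl
    rw [hfs] at he
    have hcast : ((l + 2 : ℕ) : ℝ) - 1 = (l : ℝ) + 1 := by push_cast; ring
    rw [hcast] at hl
    linarith [hl, he]
  -- Step A: deriv g s ≥ -s for s > 0
  have hstepA : ∀ s : ℝ, 0 < s → -s ≤ deriv g s := by
    intro s hs
    have hm : (fun r : ℝ => r ^ (l + 1) * deriv g r + r ^ (l + 2) / ((l : ℝ) + 2)) 0
        ≤ (fun r : ℝ => r ^ (l + 1) * deriv g r + r ^ (l + 2) / ((l : ℝ) + 2)) s := by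
      refine mono_of_hasDeriv (F := fun r : ℝ => r ^ (l + 1) * deriv g r + r ^ (l + 2) / ((l : ℝ) + 2)) hs.le ?_ ?_
      · exact (((continuous_pow _).mul hdgC.continuous).add
          ((continuous_pow _).div_const _)).continuousOn
      · intro r hr
        refine ⟨-(r ^ (l + 1) * f r ^ q) + r ^ (l + 1), ?_, ?_⟩
        · have h1 : f r ^ q ≤ 1 := hf1q r
          have hrp : (0:ℝ) ≤ r ^ (l + 1) := pow_nonneg hr.1.le _
          nlinarith
        · have h2 : HasDerivAt (fun x : ℝ => x ^ (l + 2) / ((l : ℝ) + 2)) (r ^ (l + 1)) r := by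
            have h3 := (hasDerivAt_pow (l + 2) r).div_const ((l : ℝ) + 2)
            refine h3.congr_deriv ?_
            rw [show l + 2 - 1 = l + 1 by omega]
            push_cast
            field_simp
          exact (hodeG r hr.1).add h2
    simp only [zero_pow (by omega : l + 1 ≠ 0), zero_pow (by omega : l + 2 ≠ 0),
      zero_mul, zero_div, add_zero, zero_add] at hm
    have hsp : (0:ℝ) < s ^ (l + 1) := pow_pos hs _
    have hdiv : s ^ (l + 2) / ((l : ℝ) + 2) ≤ s ^ (l + 2) := by
      apply div_le_self (by positivity)
      have : (0:ℝ) ≤ (l:ℝ) := Nat.cast_nonneg l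
      linarith
    have hpow : s ^ (l + 2) = s ^ (l + 1) * s := pow_succ s (l + 1)
    have h2 : 0 ≤ s ^ (l + 1) * (deriv g s + s) := by nlinarith
    nlinarith
  -- Step B : g s ≥ g0 - s^2/2 for s ≥ 0
  have hstepB : ∀ s : ℝ, 0 ≤ s → g0 - s ^ 2 / 2 ≤ g s := by
    intro s hs0
    rcases eq_or_lt_of_le hs0 with h | hs
    · rw [← h, hg00]; norm_num
    · have hm : (fun r : ℝ => g r + r ^ 2 / 2) 0 ≤ (fun r : ℝ => g r + r ^ 2 / 2) s := by
        refine mono_of_hasDeriv (F := fun r : ℝ => g r + r ^ 2 / 2) hs.le ?_ ?_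
        · exact (hgC.continuous.add ((continuous_pow 2).div_const 2)).continuousOn
        · intro r hr
          refine ⟨deriv g r + r, by linarith [hstepA r hr.1], ?_⟩
          have hg' : HasDerivAt g (deriv g r) r :=
            ((hgC.differentiable (by norm_num)) r).hasDerivAt
          have h2 : HasDerivAt (fun x : ℝ => x ^ 2 / 2) r r := by
            have h3 := (hasDerivAt_pow 2 r).div_const 2
            refine h3.congr_deriv ?_
            push_cast
            ring
          exact hg'.add h2
      simp only [hg00] at hm
      have : g0 + 0 ^ 2 / 2 ≤ g s + s ^ 2 / 2 := hm
      linarith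
  obtain ⟨r0, hr0def⟩ : ∃ z : ℝ, z = Real.sqrt g0 := ⟨_, rfl⟩
  have hr0pos : 0 < r0 := by rw [hr0def]; exact Real.sqrt_pos.mpr hg0pos
  have hr0sq : r0 ^ 2 = g0 := by rw [hr0def]; exact Real.sq_sqrt hg0pos.le
  -- Step C
  obtain ⟨M, hMdef⟩ : ∃ z : ℝ, z = (g0 / 2) ^ p * r0 ^ (l + 2) / ((l : ℝ) + 2) := ⟨_, rfl⟩
  have hMpos : 0 < M := by rw [hMdef]; positivity
  have hstepC : r0 ^ (l + 1) * deriv f r0 ≤ -M := by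
    have ha : (fun r : ℝ => r ^ (l + 1) * deriv f r + (g0 / 2) ^ p * (r ^ (l + 2) / ((l : ℝ) + 2))) r0
        ≤ (fun r : ℝ => r ^ (l + 1) * deriv f r + (g0 / 2) ^ p * (r ^ (l + 2) / ((l : ℝ) + 2))) 0 := by
      refine anti_of_hasDeriv (F := fun r : ℝ => r ^ (l + 1) * deriv f r + (g0 / 2) ^ p * (r ^ (l + 2) / ((l : ℝ) + 2))) hr0pos.le ?_ ?_
      · exact (((continuous_pow _).mul hdfC.continuous).add
          (continuous_const.mul ((continuous_pow _).div_const _))).continuousOn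
      · intro r hr
        refine ⟨-(r ^ (l + 1) * g r ^ p) + (g0 / 2) ^ p * r ^ (l + 1), ?_, ?_⟩
        · have hgr : g0 / 2 ≤ g r := by
            have h1 := hstepB r hr.1.le
            have h2 : r ^ 2 ≤ r0 ^ 2 := by nlinarith [hr.1, hr.2]
            rw [hr0sq] at h2
            linarith
          have h3 : (g0 / 2) ^ p ≤ g r ^ p := Real.rpow_le_rpow (by positivity) hgr hp0.le
          have hrp : (0:ℝ) ≤ r ^ (l + 1) := pow_nonneg hr.1.le _
          nlinarith
        · have h2 : HasDerivAt (fun x : ℝ => (g0 / 2) ^ p * (x ^ (l + 2) / ((l : ℝ) + 2)))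
              ((g0 / 2) ^ p * r ^ (l + 1)) r := by
            have h3 := ((hasDerivAt_pow (l + 2) r).div_const ((l : ℝ) + 2)).const_mul ((g0 / 2) ^ p)
            refine h3.congr_deriv ?_
            rw [show l + 2 - 1 = l + 1 by omega]
            push_cast
            field_simp
          exact (hodeF r hr.1).add h2
    simp only [zero_pow (by omega : l + 1 ≠ 0), zero_pow (by omega : l + 2 ≠ 0),
      zero_mul, zero_div, mul_zero, add_zero, zero_add] at ha
    have : M = (g0 / 2) ^ p * (r0 ^ (l + 2) / ((l : ℝ) + 2)) := by
      rw [hMdef]; ring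
    linarith [ha, this.ge]
  -- Step D+E : deriv f s ≤ -c on [r0, 2r0]
  obtain ⟨c, hcdef⟩ : ∃ z : ℝ, z = M / (2 * r0) ^ (l + 1) := ⟨_, rfl⟩
  have hcpos : 0 < c := by rw [hcdef]; positivity
  have hstepE : ∀ s ∈ Set.Icc r0 (2 * r0), deriv f s ≤ -c := by
    intro s hs
    have hspos : 0 < s := lt_of_lt_of_le hr0pos hs.1
    have hF : s ^ (l + 1) * deriv f s ≤ r0 ^ (l + 1) * deriv f r0 := by
      have := anti_of_hasDeriv hs.1
        (((continuous_pow (l + 1)).mul hdfC.continuous).continuousOn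
          : ContinuousOn (fun r : ℝ => r ^ (l + 1) * deriv f r) (Set.Icc r0 s))
        (fun r hr => ⟨-(r ^ (l + 1) * g r ^ p),
          neg_nonpos.mpr (mul_nonneg (pow_nonneg (le_of_lt (lt_trans hr0pos hr.1)) _)
            (Real.rpow_nonneg (hgpos r).le p)), hodeF r (lt_trans hr0pos hr.1)⟩)
      exact this
    have hFm : s ^ (l + 1) * deriv f s ≤ -M := le_trans hF hstepC
    have hsp : (0:ℝ) < s ^ (l + 1) := pow_pos hspos _
    have h1 : deriv f s ≤ -M / s ^ (l + 1) := by
      rw [le_div_iff₀ hsp, mul_comm]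
      exact hFm
    have h2 : -M / s ^ (l + 1) ≤ -M / (2 * r0) ^ (l + 1) := by
      rw [neg_div, neg_div, neg_le_neg_iff]
      apply div_le_div_of_nonneg_left hMpos.le hsp
      exact pow_le_pow_left₀ hspos.le hs.2 _
    calc deriv f s ≤ -M / s ^ (l + 1) := h1
      _ ≤ -M / (2 * r0) ^ (l + 1) := h2
      _ = -c := by rw [hcdef, neg_div]
  -- Step F : f (2 r0) ≤ 1 - c * r0
  have hstepF : f (2 * r0) ≤ 1 - c * r0 := by
    have hle : r0 ≤ 2 * r0 := by linarith
    have hb : (fun r : ℝ => f r + c * r) (2 * r0) ≤ (fun r : ℝ => f r + c * r) r0 := by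
      refine anti_of_hasDeriv (F := fun r : ℝ => f r + c * r) hle ?_ ?_
      · exact (hfC.continuous.add (continuous_const.mul continuous_id)).continuousOn
      · intro r hr
        refine ⟨deriv f r + c, by linarith [hstepE r ⟨hr.1.le, hr.2.le⟩], ?_⟩
        have hf' : HasDerivAt f (deriv f r) r :=
          ((hfC.differentiable (by norm_num)) r).hasDerivAt
        have h2 : HasDerivAt (fun x : ℝ => c * x) c r := by
          simpa using (hasDerivAt_id r).const_mul c
        exact hf'.add h2
    simp only at hb
    have h3 := hfle1 r0
    linarith
  -- conclude
  have hkey : (g0 / 2) ^ p * g0 < (l + 2 : ℝ) * 2 ^ (l + 1) := by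
    have hpos2 : 0 < f (2 * r0) := hfpos _
    have hcr1 : c * r0 < 1 := by linarith [hstepF]
    have hcr : c * r0 = (g0 / 2) ^ p * g0 / (((l : ℝ) + 2) * 2 ^ (l + 1)) := by
      rw [hcdef, hMdef, mul_pow, pow_succ r0 (l + 1)]
      have hr0ne : r0 ≠ 0 := hr0pos.ne'
      field_simp
      rw [← hr0sq]
    rw [hcr] at hcr1
    have hden : (0:ℝ) < ((l : ℝ) + 2) * 2 ^ (l + 1) := by positivity
    rw [div_lt_one hden] at hcr1
    exact hcr1
  rw [← hg0def]
  by_contra hcon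
  push_neg at hcon
  set N : ℝ := ((l : ℝ) + 2) * 2 ^ (l + 2) with hNdef
  have hNc : ((l + 2 : ℕ) : ℝ) * 2 ^ (l + 2) = N := by push_cast; ring
  rw [hNc] at hcon
  have hl0 : (0:ℝ) ≤ (l : ℝ) := Nat.cast_nonneg l
  have hN1 : (1:ℝ) ≤ N := by
    have h1 : (1:ℝ) ≤ 2 ^ (l + 2) := one_le_pow₀ (by norm_num)
    have h2 : (1:ℝ) ≤ (l : ℝ) + 2 := by linarith
    calc (1:ℝ) = 1 * 1 := by ring
      _ ≤ ((l : ℝ) + 2) * 2 ^ (l + 2) :=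
        mul_le_mul h2 h1 (by norm_num) (by linarith)
  have hhalf : N ^ 2 ≤ g0 / 2 := by linarith
  have hone : (1:ℝ) ≤ g0 / 2 := by nlinarith
  have h12 : (g0 / 2) ^ ((1:ℝ)/2) ≤ (g0 / 2) ^ p :=
    Real.rpow_le_rpow_of_exponent_le hone hp
  have hsqrt : N ≤ (g0 / 2) ^ ((1:ℝ)/2) := by
    rw [← Real.sqrt_eq_rpow]
    exact (Real.le_sqrt (by linarith) (by linarith)).mpr hhalf
  have hg01 : (1:ℝ) ≤ g0 := by linarith
  have hprod : N ≤ (g0 / 2) ^ p * g0 := by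
    have h3 : N ≤ (g0 / 2) ^ p := le_trans hsqrt h12
    calc N = N * 1 := by ring
      _ ≤ (g0 / 2) ^ p * g0 :=
        mul_le_mul h3 hg01 (by norm_num) (Real.rpow_nonneg (by positivity) p)
  have h2pow : (2:ℝ) ^ (l + 1) ≤ 2 ^ (l + 2) := by
    apply pow_le_pow_right₀ (by norm_num)
    omega
  have hNge : ((l : ℝ) + 2) * 2 ^ (l + 1) ≤ N := by
    rw [hNdef]
    exact mul_le_mul_of_nonneg_left h2pow (by positivity)
  linarith

def IsGroundState (n : ℕ) (p q : ℝ) (U V : EuclideanSpace ℝ (Fin n) → ℝ) : Prop :=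
  ContDiff ℝ 2 U ∧ ContDiff ℝ 2 V ∧
  (∀ x, 0 < U x) ∧ (∀ x, 0 < V x) ∧
  (∀ x, -lap U x = V x ^ p) ∧ (∀ x, -lap V x = U x ^ q) ∧
  (∀ x y, ‖x‖ ≤ ‖y‖ → U y ≤ U x) ∧
  (∀ x y, ‖x‖ ≤ ‖y‖ → V y ≤ V x) ∧
  Tendsto U (cocompact _) (nhds 0) ∧
  Tendsto V (cocompact _) (nhds 0) ∧
  U 0 = 1
theorem uniform_bound_near_one (n : ℕ) (hn : 5 ≤ n) :
    ∃ ε₀ : ℝ, 0 < ε₀ ∧ ∃ C : ℝ, 0 < C ∧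
      ∀ p q : ℝ, 0 < p → 0 < q →
        1 / (p + 1) + 1 / (q + 1) = ((n : ℝ) - 2) / n →
        |p - 1| ≤ ε₀ →
        ∀ U V : EuclideanSpace ℝ (Fin n) → ℝ, IsGroundState n p q U V →
          (∀ x, U x ≤ 1) ∧ (∀ x, V x ≤ C) := by
  have hn0 : (0:ℝ) < (n : ℝ) := by exact_mod_cast (by omega : 0 < n)
  refine ⟨1/2, by norm_num, 2 * ((n : ℝ) * 2 ^ n) ^ 2, by positivity, ?_⟩
  intro p q hp hq _hhyp hpe U V hgs
  obtain ⟨hU, hV, hUpos, hVpos, heq1, heq2, hUmono, hVmono, _, _, hU0⟩ := hgs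
  have hUle : ∀ x, U x ≤ 1 := fun x => hU0 ▸ hUmono 0 x (by simp)
  refine ⟨hUle, fun x => ?_⟩
  have hp2 : 1/2 ≤ p := by
    obtain ⟨h1, h2⟩ := abs_le.mp hpe
    linarith
  have hb := main_bound hn hp2 hq hU hV hUpos hVpos heq1 heq2 hUmono hVmono hU0
  have hx : V x ≤ V 0 := hVmono 0 x (by simp)
  linarith
end

section
/- Let n ≥ 5 and let η₂ > 0 be an arbitrarily small number. There exist ε₀ > 0 and a constant C > 0 depending only on n, ε₀ and η₂ such that for every p on the critical hyperbola with |p − 1| ≤ ε₀, the ground state (U_p, V_p) satisfies U_p(x) ≥ C/(1 + |x|^{n−4+η₂}) and V_p(x) ≥ C/(1 + |x|^{n−2}) for all x ∈ ℝⁿ. -/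
open Filter MeasureTheory Topology

open intervalIntegral

namespace RadialAux

variable {n : ℕ}

abbrev E (n : ℕ) := EuclideanSpace ℝ (Fin n)

noncomputable def ev (n : ℕ) (i : Fin n) : E n := EuclideanSpace.single i 1

lemma norm_ev (i : Fin n) : ‖ev n i‖ = 1 := by
  simp [ev]

lemma norm_combo {i j : Fin n} (hij : i ≠ j) (a b : ℝ) :
    ‖a • ev n i + b • ev n j‖ ^ 2 = a ^ 2 + b ^ 2 := by
  have hinner : (inner ℝ (a • ev n i) (b • ev n j) : ℝ) = 0 := by
    rw [real_inner_smul_left, real_inner_smul_right]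
    have h0 : (inner ℝ (ev n i) (ev n j) : ℝ) = 0 := by
      rw [show ev n i = EuclideanSpace.single i (1:ℝ) from rfl,
        EuclideanSpace.inner_single_left]
      simp [ev, EuclideanSpace.single_apply, hij]
    rw [h0]; ring
  rw [norm_add_sq_real, hinner]
  simp [norm_smul, mul_pow, norm_ev, sq_abs]


variable {f : E n → ℝ}

lemma comp_curve (hf : ContDiff ℝ 2 f) {c cd : ℝ → E n} (hc : ∀ s, HasDerivAt c (cd s) s)
    (s : ℝ) : HasDerivAt (fun s => f (c s)) (fderiv ℝ f (c s) (cd s)) s :=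
  ((hf.differentiable (by norm_num) (c s)).hasFDerivAt).comp_hasDerivAt s (hc s)

lemma comp_curve_fderiv (hf : ContDiff ℝ 2 f) {c cd : ℝ → E n}
    (hc : ∀ s, HasDerivAt c (cd s) s) (s : ℝ) :
    HasDerivAt (fun s => fderiv ℝ f (c s)) (fderiv ℝ (fderiv ℝ f) (c s) (cd s)) s := by
  have hF1 : ContDiff ℝ 1 (fderiv ℝ f) := hf.fderiv_right (by norm_num)
  exact ((hF1.differentiable (by norm_num) (c s)).hasFDerivAt).comp_hasDerivAt s (hc s)

lemma sphere_dir (hf : ContDiff ℝ 2 f) (hrad : ∀ x y : E n, ‖x‖ = ‖y‖ → f x = f y)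
    {t : ℝ} (ht : t ≠ 0) {i j : Fin n} (hij : i ≠ j) :
    fderiv ℝ (fderiv ℝ f) (t • ev n i) (ev n j) (ev n j)
      = fderiv ℝ f (t • ev n i) (ev n i) / t := by
  set c : ℝ → E n := fun s => (t * Real.cos s) • ev n i + (t * Real.sin s) • ev n j with hcdef
  set cd : ℝ → E n := fun s => (-(t * Real.sin s)) • ev n i + (t * Real.cos s) • ev n j
    with hcd_def
  set cdd : ℝ → E n := fun s => (-(t * Real.cos s)) • ev n i + (-(t * Real.sin s)) • ev n j
    with hcdd_def
  have hc : ∀ s, HasDerivAt c (cd s) s := by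
    intro s
    have h1 : HasDerivAt (fun s => (t * Real.cos s)) (-(t * Real.sin s)) s := by
      simpa [mul_comm] using (Real.hasDerivAt_cos s).const_mul t
    have h2 : HasDerivAt (fun s => (t * Real.sin s)) (t * Real.cos s) s := by
      simpa [mul_comm] using (Real.hasDerivAt_sin s).const_mul t
    exact (h1.smul_const (ev n i)).add (h2.smul_const (ev n j))
  have hcd : ∀ s, HasDerivAt cd (cdd s) s := by
    intro s
    have h1 : HasDerivAt (fun s => (-(t * Real.sin s))) (-(t * Real.cos s)) s := by
      exact ((Real.hasDerivAt_sin s).const_mul t).neg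
    have h2 : HasDerivAt (fun s => (t * Real.cos s)) (-(t * Real.sin s)) s := by
      simpa [mul_comm] using (Real.hasDerivAt_cos s).const_mul t
    exact (h1.smul_const (ev n i)).add (h2.smul_const (ev n j))
  have hnorm : ∀ s, ‖c s‖ = ‖t • ev n i‖ := by
    intro s
    have h1 : ‖c s‖ ^ 2 = t ^ 2 := by
      rw [hcdef]
      rw [norm_combo hij]
      have := Real.sin_sq_add_cos_sq s
      ring_nf
      nlinarith [Real.sin_sq_add_cos_sq s]
    have h2 : ‖t • ev n i‖ ^ 2 = t ^ 2 := by
      rw [norm_smul, norm_ev]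
      simp [sq_abs]
    have := h1.trans h2.symm
    nlinarith [norm_nonneg (c s), norm_nonneg (t • ev n i), this]
  have hconst : ∀ s, f (c s) = f (t • ev n i) := fun s => hrad _ _ (hnorm s)
  have hzero : ∀ s, fderiv ℝ f (c s) (cd s) = 0 := by
    intro s
    have h1 := comp_curve hf hc s
    have h2 : HasDerivAt (fun s => f (c s)) 0 s := by
      have he : (fun s => f (c s)) = fun _ => f (t • ev n i) := funext hconst
      rw [he]; exact hasDerivAt_const s _
    exact h1.unique h2
  have h3 : HasDerivAt (fun s => fderiv ℝ f (c s) (cd s))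
      (fderiv ℝ (fderiv ℝ f) (c 0) (cd 0) (cd 0) + fderiv ℝ f (c 0) (cdd 0)) 0 :=
    (comp_curve_fderiv hf hc 0).clm_apply (hcd 0)
  have h4 : HasDerivAt (fun s => fderiv ℝ f (c s) (cd s)) 0 0 := by
    have he : (fun s => fderiv ℝ f (c s) (cd s)) = fun _ => (0:ℝ) := funext hzero
    rw [he]; exact hasDerivAt_const 0 0
  have h5 := h3.unique h4
  have e1 : c 0 = t • ev n i := by simp [hcdef]
  have e2 : cd 0 = t • ev n j := by simp [hcd_def]
  have e3 : cdd 0 = (-t) • ev n i := by simp [hcdd_def]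
  rw [e1, e2, e3] at h5
  set A := fderiv ℝ (fderiv ℝ f) (t • ev n i) (ev n j) (ev n j) with hA
  set B := fderiv ℝ f (t • ev n i) (ev n i) with hB
  have h6 : t * (t * A) + (-t) * B = 0 := by
    rw [hA, hB]
    simpa [ContinuousLinearMap.map_smul, ContinuousLinearMap.smul_apply, smul_eq_mul,
      mul_comm, mul_left_comm] using h5
  have h7 : t * (t * A) = t * B := by linarith
  have h8 : t * A = B := mul_left_cancel₀ ht h7
  field_simp
  linarith

noncomputable def gd (f : E n → ℝ) (i : Fin n) (t : ℝ) : ℝ :=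
  fderiv ℝ f (t • ev n i) (ev n i)

noncomputable def gdd (f : E n → ℝ) (i : Fin n) (t : ℝ) : ℝ :=
  fderiv ℝ (fderiv ℝ f) (t • ev n i) (ev n i) (ev n i)

lemma hasDerivAt_line_aux (i : Fin n) (s : ℝ) :
    HasDerivAt (fun s : ℝ => s • ev n i) (ev n i) s := by
  simpa using (hasDerivAt_id s).smul_const (ev n i)

lemma hasDerivAt_line (hf : ContDiff ℝ 2 f) (i : Fin n) (t : ℝ) :
    HasDerivAt (fun s => f (s • ev n i)) (gd f i t) t :=
  comp_curve hf (fun s => hasDerivAt_line_aux i s) t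

lemma hasDerivAt_gd (hf : ContDiff ℝ 2 f) (i : Fin n) (t : ℝ) :
    HasDerivAt (gd f i) (gdd f i t) t := by
  have h := (comp_curve_fderiv hf (fun s => hasDerivAt_line_aux i s) t).clm_apply
    (hasDerivAt_const t (ev n i))
  simp only [map_zero, add_zero] at h
  exact h

lemma lap_radial (hf : ContDiff ℝ 2 f) (hrad : ∀ x y : E n, ‖x‖ = ‖y‖ → f x = f y)
    {t : ℝ} (ht : t ≠ 0) (i : Fin n) :
    lap f (t • ev n i) = gdd f i t + ((n : ℝ) - 1) * gd f i t / t := by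
  have hn1 : 1 ≤ n := i.pos
  unfold lap
  simp only [show ∀ j : Fin n, (EuclideanSpace.single j (1:ℝ)) = ev n j from fun _ => rfl]
  rw [← Finset.add_sum_erase Finset.univ _ (Finset.mem_univ i)]
  have hterms : ∀ j ∈ Finset.univ.erase i,
      fderiv ℝ (fderiv ℝ f) (t • ev n i) (ev n j) (ev n j) = gd f i t / t := by
    intro j hj
    exact sphere_dir hf hrad ht (Finset.ne_of_mem_erase hj).symm
  rw [Finset.sum_congr rfl hterms, Finset.sum_const, Finset.card_erase_of_mem (Finset.mem_univ i),
    Finset.card_univ, Fintype.card_fin]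
  have : ((n - 1 : ℕ) : ℝ) = (n : ℝ) - 1 := by
    push_cast [Nat.cast_sub hn1]; ring
  rw [nsmul_eq_mul, this]
  rw [show gdd f i t = fderiv ℝ (fderiv ℝ f) (t • ev n i) (ev n i) (ev n i) from rfl]
  ring

end RadialAux


namespace OneDim

variable {n : ℕ} {φ G' G'' F : ℝ → ℝ}

lemma cont_of_hasDerivAt {f f' : ℝ → ℝ} (h : ∀ t, HasDerivAt f (f' t) t) : Continuous f :=
  continuous_iff_continuousAt.2 fun t => (h t).differentiableAt.continuousAt

lemma key_rep (hn : 5 ≤ n)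
    (hG' : ∀ t, HasDerivAt φ (G' t) t) (hG'' : ∀ t, HasDerivAt G' (G'' t) t)
    (hF : Continuous F)
    (hODE : ∀ t, t ≠ 0 → G'' t + ((n : ℝ) - 1) * G' t / t = -F t) :
    ∀ t, t ^ (n - 1) * G' t = -∫ s in (0:ℝ)..t, s ^ (n - 1) * F s := by
  set P : ℝ → ℝ := fun t => ∫ s in (0:ℝ)..t, s ^ (n - 1) * F s with hPdef
  have hPc : Continuous fun s : ℝ => s ^ (n - 1) * F s := (continuous_pow _).mul hF
  have hP : ∀ t, HasDerivAt P (t ^ (n - 1) * F t) t := fun t =>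
    (hPc.integral_hasStrictDerivAt 0 t).hasDerivAt
  set h : ℝ → ℝ := fun t => t ^ (n - 1) * G' t with hhdef
  have hh : ∀ t, HasDerivAt h (((n - 1 : ℕ) : ℝ) * t ^ (n - 2) * G' t + t ^ (n - 1) * G'' t) t := by
    intro t
    have := (hasDerivAt_pow (n - 1) t).mul (hG'' t)
    have hexp : n - 1 - 1 = n - 2 := by omega
    simp only [hexp] at this; exact this
  have key : ∀ t, HasDerivAt (fun t => h t + P t) 0 t := by
    intro t
    have := (hh t).add (hP t)
    rcases eq_or_ne t 0 with rfl | ht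
    · simp [zero_pow (show n - 1 ≠ 0 by omega), zero_pow (show n - 2 ≠ 0 by omega)] at this; exact this
    · have hb := hODE t ht
      have hcast : ((n - 1 : ℕ) : ℝ) = (n : ℝ) - 1 := by
        have : (1 : ℕ) ≤ n := by omega
        push_cast [Nat.cast_sub this]; ring
      have hpow : t ^ (n - 1) = t ^ (n - 2) * t := by
        rw [← pow_succ]; congr 1; omega
      have heq : ((n - 1 : ℕ) : ℝ) * t ^ (n - 2) * G' t + t ^ (n - 1) * G'' t
          + t ^ (n - 1) * F t = 0 := by
        rw [hcast, hpow]
        have hb' : t * G'' t + ((n : ℝ) - 1) * G' t = -F t * t := by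
          field_simp at hb; linarith
        linear_combination t ^ (n - 2) * hb'
      exact this.congr_deriv (by linarith [heq])
  have hconst : ∀ t, h t + P t = h 0 + P 0 :=
    fun t => is_const_of_deriv_eq_zero
      (fun s => ((key s).differentiableAt : DifferentiableAt ℝ _ s))
      (fun s => (key s).deriv) t 0
  intro t
  have h0 : h 0 + P 0 = 0 := by
    simp [hhdef, hPdef, zero_pow (show n - 1 ≠ 0 by omega)]
  have := hconst t
  rw [h0] at this
  have : h t = -P t := by linarith
  simpa [hhdef] using this

lemma diff_eq {φ G' : ℝ → ℝ} (hG' : ∀ t, HasDerivAt φ (G' t) t) (hG'c : Continuous G')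
    (a b : ℝ) : φ a - φ b = ∫ s in a..b, -G' s := by
  rw [intervalIntegral.integral_neg, intervalIntegral.integral_eq_sub_of_hasDerivAt
    (fun x _ => hG' x) (hG'c.intervalIntegrable a b)]
  ring

lemma est_low {f : ℝ → ℝ} (hf : Continuous f) {a b m : ℝ} (hab : a ≤ b)
    (h : ∀ s ∈ Set.Icc a b, m ≤ f s) : m * (b - a) ≤ ∫ s in a..b, f s := by
  have h1 : (∫ _ in a..b, m) ≤ ∫ s in a..b, f s :=
    intervalIntegral.integral_mono_on hab intervalIntegrable_const
      (hf.intervalIntegrable a b) h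
  simpa [intervalIntegral.integral_const, smul_eq_mul, mul_comm] using h1

lemma est_up {f : ℝ → ℝ} (hf : Continuous f) {a b m : ℝ} (hab : a ≤ b)
    (h : ∀ s ∈ Set.Icc a b, f s ≤ m) : (∫ s in a..b, f s) ≤ m * (b - a) := by
  have h1 : (∫ s in a..b, f s) ≤ ∫ _ in a..b, m :=
    intervalIntegral.integral_mono_on hab (hf.intervalIntegrable a b)
      intervalIntegrable_const h
  simpa [intervalIntegral.integral_const, smul_eq_mul, mul_comm] using h1

/-- window lower bound for `∫ s in 0..t` -/
lemma window_low {f : ℝ → ℝ} (hf : Continuous f) {t m : ℝ} (ht : 0 ≤ t) (hm : 0 ≤ m)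
    (hnonneg : ∀ s, 0 ≤ s → 0 ≤ f s)
    (h : ∀ s ∈ Set.Icc (t/2) t, m ≤ f s) : m * (t/2) ≤ ∫ s in (0:ℝ)..t, f s := by
  have hsplit : (∫ s in (0:ℝ)..(t/2), f s) + (∫ s in (t/2)..t, f s) = ∫ s in (0:ℝ)..t, f s :=
    intervalIntegral.integral_add_adjacent_intervals (hf.intervalIntegrable _ _)
      (hf.intervalIntegrable _ _)
  have h1 : (0:ℝ) ≤ ∫ s in (0:ℝ)..(t/2), f s := by
    have := est_low hf (by linarith : (0:ℝ) ≤ t/2) (fun s hs => hnonneg s hs.1)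
    simpa using this
  have h2 : m * (t/2) ≤ ∫ s in (t/2)..t, f s := by
    have := est_low hf (by linarith : t/2 ≤ t) h
    have he : t - t/2 = t/2 := by ring
    rwa [he] at this
  linarith

section Tools

variable {n : ℕ} {φ G' G'' F : ℝ → ℝ}

lemma negD_rep (hn : 5 ≤ n)
    (hd : ∀ t, HasDerivAt φ (G' t) t) (hdd : ∀ t, HasDerivAt G' (G'' t) t)
    (hF : Continuous F)
    (hODE : ∀ t, t ≠ 0 → G'' t + ((n : ℝ) - 1) * G' t / t = -F t) :
    ∀ s, 0 < s → -G' s = (∫ σ in (0:ℝ)..s, σ ^ (n - 1) * F σ) / s ^ (n - 1) := by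
  intro s hs
  have h := key_rep hn hd hdd hF hODE s
  have hsn : (s : ℝ) ^ (n - 1) ≠ 0 := pow_ne_zero _ hs.ne'
  field_simp
  linarith [h]

lemma negD_up (hn : 5 ≤ n)
    (hd : ∀ t, HasDerivAt φ (G' t) t) (hdd : ∀ t, HasDerivAt G' (G'' t) t)
    (hF : Continuous F) (hFpos : ∀ t, 0 < F t)
    (hODE : ∀ t, t ≠ 0 → G'' t + ((n : ℝ) - 1) * G' t / t = -F t)
    (hD0 : G' 0 = 0) :
    ∀ s K, 0 ≤ s → 0 ≤ K → (∀ σ, 0 ≤ σ → σ ≤ s → F σ ≤ K) → -G' s ≤ K * s := by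
  intro s K hs hK hB
  rcases eq_or_lt_of_le hs with rfl | hs
  · simp [hD0]
  · have hint : (∫ σ in (0:ℝ)..s, σ ^ (n - 1) * F σ) ≤ (K * s ^ (n - 1)) * (s - 0) :=
      est_up ((continuous_pow _).mul hF) hs.le (fun σ hσ => by
        have h1 : σ ^ (n - 1) ≤ s ^ (n - 1) := pow_le_pow_left₀ hσ.1 hσ.2 _
        calc σ ^ (n - 1) * F σ ≤ s ^ (n - 1) * K :=
              mul_le_mul h1 (hB σ hσ.1 hσ.2) (hFpos σ).le (pow_nonneg (hσ.1.trans hσ.2) _)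
          _ = K * s ^ (n - 1) := mul_comm _ _)
    rw [negD_rep hn hd hdd hF hODE s hs, div_le_iff₀ (pow_pos hs _)]
    nlinarith [pow_pos hs (n-1)]

lemma negD_low (hn : 5 ≤ n)
    (hd : ∀ t, HasDerivAt φ (G' t) t) (hdd : ∀ t, HasDerivAt G' (G'' t) t)
    (hF : Continuous F) (hFpos : ∀ t, 0 < F t)
    (hODE : ∀ t, t ≠ 0 → G'' t + ((n : ℝ) - 1) * G' t / t = -F t) :
    ∀ s m, 0 < s → 0 ≤ m → (∀ σ, s/2 ≤ σ → σ ≤ s → m ≤ σ ^ (n - 1) * F σ) →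
      m * (s/2) / s ^ (n - 1) ≤ -G' s := by
  intro s m hs hm hB
  have hw := window_low ((continuous_pow _).mul hF) hs.le hm
    (fun σ hσ => mul_nonneg (pow_nonneg hσ _) (hFpos σ).le) (fun σ hσ => hB σ hσ.1 hσ.2)
  rw [negD_rep hn hd hdd hF hODE s hs]
  exact (div_le_div_iff_of_pos_right (pow_pos hs _)).2 hw

lemma int_low_window (hn : 5 ≤ n) (hF : Continuous F) (hFpos : ∀ t, 0 < F t) :
    ∀ s t m, 0 < t → t ≤ s → 0 ≤ m → (∀ σ, t/2 ≤ σ → σ ≤ t → m ≤ σ ^ (n - 1) * F σ) →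
      m * (t/2) ≤ ∫ σ in (0:ℝ)..s, σ ^ (n - 1) * F σ := by
  intro s t m ht hts hm hB
  have hC : Continuous (fun σ : ℝ => σ ^ (n - 1) * F σ) := (continuous_pow _).mul hF
  have hsplit : (∫ σ in (0:ℝ)..t, σ ^ (n-1) * F σ) + (∫ σ in t..s, σ ^ (n-1) * F σ)
      = ∫ σ in (0:ℝ)..s, σ ^ (n-1) * F σ :=
    intervalIntegral.integral_add_adjacent_intervals (hC.intervalIntegrable _ _)
      (hC.intervalIntegrable _ _)
  have h1 : m * (t/2) ≤ ∫ σ in (0:ℝ)..t, σ ^ (n-1) * F σ :=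
    window_low hC ht.le hm (fun σ hσ => mul_nonneg (pow_nonneg hσ _) (hFpos σ).le)
      (fun σ hσ => hB σ hσ.1 hσ.2)
  have h2 : (0:ℝ) ≤ ∫ σ in t..s, σ ^ (n-1) * F σ := by
    have := est_low hC hts (fun σ hσ => mul_nonneg (pow_nonneg (ht.le.trans hσ.1) _) (hFpos σ).le)
    simpa using this
  linarith

lemma diff_low (hd : ∀ t, HasDerivAt φ (G' t) t) (hdd : ∀ t, HasDerivAt G' (G'' t) t)
    {a b m : ℝ} (hab : a ≤ b) (h : ∀ s ∈ Set.Icc a b, m ≤ -G' s) :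
    m * (b - a) ≤ φ a - φ b := by
  rw [diff_eq hd (cont_of_hasDerivAt hdd) a b]
  exact est_low (cont_of_hasDerivAt hdd).neg hab h

lemma diff_up (hd : ∀ t, HasDerivAt φ (G' t) t) (hdd : ∀ t, HasDerivAt G' (G'' t) t)
    {a b m : ℝ} (hab : a ≤ b) (h : ∀ s ∈ Set.Icc a b, -G' s ≤ m) :
    φ a - φ b ≤ m * (b - a) := by
  rw [diff_eq hd (cont_of_hasDerivAt hdd) a b]
  exact est_up (cont_of_hasDerivAt hdd).neg hab h

end Tools


lemma my_div_le_div_left {a b c : ℝ} (ha : 0 ≤ a) (hc : 0 < c) (hcb : c ≤ b) :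
    a / b ≤ a / c := by
  have hb : 0 < b := lt_of_lt_of_le hc hcb
  rw [div_le_div_iff₀ hb hc]
  nlinarith

noncomputable def cM (n : ℕ) : ℝ := 4 ^ (2*n+2) + 1
noncomputable def cRho (n : ℕ) : ℝ := 1 / (2 * cM n)
noncomputable def cA (n : ℕ) : ℝ := (cRho n / 2) ^ n * (1/2 : ℝ) ^ (4*n)
noncomputable def cV (n : ℕ) : ℝ := cA n / 2 ^ (n-1)
noncomputable def cW (n : ℕ) : ℝ := cV n / 2 ^ (n-2)
noncomputable def cB (n : ℕ) : ℝ := (cV n) ^ 2 / 2 ^ n / 2 ^ (2*n)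
noncomputable def cUf (n : ℕ) : ℝ := cB n / 2 ^ (2*n)

lemma cM_pos (n : ℕ) : 1 ≤ cM n := by
  unfold cM
  have : (0:ℝ) < 4 ^ (2*n+2) := by positivity
  linarith
lemma cRho_pos (n : ℕ) : 0 < cRho n := by
  unfold cRho; have := cM_pos n; positivity
lemma cRho_le_one (n : ℕ) : cRho n ≤ 1 := by
  unfold cRho
  rw [div_le_one (by have := cM_pos n; linarith)]
  have := cM_pos n; linarith
lemma cA_pos (n : ℕ) : 0 < cA n := by
  unfold cA; have := cRho_pos n; positivity
lemma cV_pos (n : ℕ) : 0 < cV n := by unfold cV; have := cA_pos n; positivity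
lemma cA_le_one (n : ℕ) : cA n ≤ 1 := by
  unfold cA
  have h1 : (cRho n / 2) ^ n ≤ 1 :=
    pow_le_one₀ (by have := cRho_pos n; positivity) (by have := cRho_le_one n; linarith)
  have h2 : ((1:ℝ)/2) ^ (4*n) ≤ 1 := pow_le_one₀ (by norm_num) (by norm_num)
  nlinarith [pow_nonneg (by have := cRho_pos n; positivity : (0:ℝ) ≤ cRho n / 2) n]
lemma cV_le_one (n : ℕ) : cV n ≤ 1 := by
  unfold cV
  rw [div_le_one (by positivity)]
  calc cA n ≤ 1 := cA_le_one n
    _ ≤ 2 ^ (n-1) := one_le_pow₀ (by norm_num)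
lemma cW_pos (n : ℕ) : 0 < cW n := by unfold cW; have := cV_pos n; positivity
lemma cB_pos (n : ℕ) : 0 < cB n := by unfold cB; have := cV_pos n; positivity
lemma cUf_pos (n : ℕ) : 0 < cUf n := by unfold cUf; have := cB_pos n; positivity

set_option maxHeartbeats 2000000 in
theorem oneDim {n : ℕ} (hn : 5 ≤ n) {p q : ℝ} (hp1 : 3/4 ≤ p) (hp2 : p ≤ 5/4)
    (hq1 : 0 ≤ q) (hq2 : q ≤ 4*(n:ℝ))
    {g w G' G'' W' W'' : ℝ → ℝ}
    (hgd : ∀ t, HasDerivAt g (G' t) t) (hgdd : ∀ t, HasDerivAt G' (G'' t) t)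
    (hwd : ∀ t, HasDerivAt w (W' t) t) (hwdd : ∀ t, HasDerivAt W' (W'' t) t)
    (hgpos : ∀ t, 0 < g t) (hwpos : ∀ t, 0 < w t)
    (hgmono : ∀ s t, 0 ≤ s → s ≤ t → g t ≤ g s)
    (hwmono : ∀ s t, 0 ≤ s → s ≤ t → w t ≤ w s)
    (hg0 : g 0 = 1) (hG'0 : G' 0 = 0) (hW'0 : W' 0 = 0)
    (hODEg : ∀ t, t ≠ 0 → G'' t + ((n:ℝ)-1) * G' t / t = -(w t ^ p))
    (hODEw : ∀ t, t ≠ 0 → W'' t + ((n:ℝ)-1) * W' t / t = -(g t ^ q))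
    {γ : ℝ} (hβγ : ((n:ℝ)-2) * p - 2 ≤ γ) :
    (∀ r, 0 ≤ r → cUf n / (1 + r ^ γ) ≤ g r) ∧
    (∀ r, 0 ≤ r → cW n / (1 + r ^ ((n:ℝ) - 2)) ≤ w r) := by
  have hnR : (5:ℝ) ≤ (n:ℝ) := by exact_mod_cast hn
  have hwc : Continuous w := cont_of_hasDerivAt hwd
  have hgc : Continuous g := cont_of_hasDerivAt hgd
  set Fg : ℝ → ℝ := fun t => w t ^ p with hFgdef
  set Fw : ℝ → ℝ := fun t => g t ^ q with hFwdef
  have hFgc : Continuous Fg := hwc.rpow_const (fun t => Or.inl (hwpos t).ne')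
  have hFwc : Continuous Fw := hgc.rpow_const (fun t => Or.inl (hgpos t).ne')
  have hFgpos : ∀ t, 0 < Fg t := fun t => Real.rpow_pos_of_pos (hwpos t) p
  have hFwpos : ∀ t, 0 < Fw t := fun t => Real.rpow_pos_of_pos (hgpos t) q
  have hgle1 : ∀ t, 0 ≤ t → g t ≤ 1 := fun t ht => hg0 ▸ hgmono 0 t le_rfl ht
  -- step 3 : w 1 ≤ 4^(2n+2)
  have hw1 : w 1 ≤ 4 ^ (2*n+2) := by
    have hp0 : (0:ℝ) ≤ p := by linarith
    set m : ℝ := (1/4:ℝ)^(n-1) * w 1 ^ p with hmdef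
    have hm0 : 0 ≤ m := by
      have := Real.rpow_nonneg (hwpos 1).le p
      positivity
    have hpt : ∀ s ∈ Set.Icc (1/2 : ℝ) 1, m / 4 ≤ -G' s := by
      intro s hs
      have hspos : (0:ℝ) < s := by linarith [hs.1]
      have hB : ∀ σ, s/2 ≤ σ → σ ≤ s → m ≤ σ ^ (n-1) * Fg σ := by
        intro σ h1 h2
        have hσ4 : (1/4:ℝ) ≤ σ := by linarith [hs.1]
        have hσpow : (1/4:ℝ)^(n-1) ≤ σ ^ (n-1) := pow_le_pow_left₀ (by norm_num) hσ4 _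
        have hwσ : w 1 ≤ w σ := hwmono σ 1 (by linarith) (by linarith [hs.2])
        have hFσ : w 1 ^ p ≤ Fg σ := Real.rpow_le_rpow (hwpos 1).le hwσ hp0
        calc m = (1/4:ℝ)^(n-1) * w 1 ^ p := rfl
          _ ≤ σ ^ (n-1) * Fg σ :=
            mul_le_mul hσpow hFσ (Real.rpow_nonneg (hwpos 1).le p) (by positivity)
      have hkey := negD_low hn hgd hgdd hFgc hFgpos hODEg s m hspos hm0 hB
      refine le_trans ?_ hkey
      have h1 : s ^ (n-1) ≤ 1 := pow_le_one₀ hspos.le hs.2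
      rw [le_div_iff₀ (pow_pos hspos _)]
      nlinarith [hs.1, pow_pos hspos (n-1)]
    have hdiff := diff_low hgd hgdd (by norm_num : (1/2:ℝ) ≤ 1) hpt
    have hle1 : g (1/2) - g 1 ≤ 1 := by
      have h1 := hgle1 (1/2) (by norm_num)
      have h2 := hgpos 1
      linarith
    have hm8 : m ≤ 8 := by nlinarith
    have hwp : w 1 ^ p ≤ 8 * 4 ^ (n-1) := by
      have h4 : (0:ℝ) < (1/4:ℝ)^(n-1) := by positivity
      have : w 1 ^ p = m / (1/4:ℝ)^(n-1) := by
        rw [hmdef]; field_simp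
      rw [this, div_le_iff₀ h4]
      have h44 : ((1/4:ℝ))^(n-1) * (4:ℝ)^(n-1) = 1 := by
        rw [← mul_pow]; norm_num
      nlinarith [pow_pos (show (0:ℝ) < 4 by norm_num) (n-1)]
    have hwp2 : w 1 ^ p ≤ 4 ^ (n+1) := by
      have he : (4:ℝ) ^ (n+1) = 16 * 4 ^ (n-1) := by
        rw [show n + 1 = (n-1) + 2 by omega, pow_add]; ring
      rw [he]
      nlinarith [pow_pos (show (0:ℝ) < 4 by norm_num) (n-1)]
    rcases le_or_gt (w 1) 1 with hc | hc
    · calc w 1 ≤ 1 := hc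
        _ ≤ 4 ^ (2*n+2) := one_le_pow₀ (by norm_num)
    · have h34 : w 1 ^ (3/4 : ℝ) ≤ 4 ^ (n+1) :=
        le_trans (Real.rpow_le_rpow_of_exponent_le hc.le hp1) hwp2
      have hw1eq : w 1 = (w 1 ^ (3/4:ℝ)) ^ ((4:ℝ)/3) := by
        rw [← Real.rpow_mul (by linarith : (0:ℝ) ≤ w 1)]
        norm_num
      rw [hw1eq]
      calc (w 1 ^ (3/4:ℝ)) ^ ((4:ℝ)/3)
          ≤ ((4:ℝ) ^ (n+1)) ^ ((4:ℝ)/3) :=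
            Real.rpow_le_rpow (Real.rpow_nonneg (by linarith) _) h34 (by norm_num)
        _ ≤ ((4:ℝ) ^ (n+1)) ^ ((2:ℝ)) :=
            Real.rpow_le_rpow_of_exponent_le (one_le_pow₀ (by norm_num)) (by norm_num)
        _ = 4 ^ (2*n+2) := by
            rw [← Real.rpow_natCast (4:ℝ) (n+1), ← Real.rpow_mul (by norm_num : (0:ℝ) ≤ 4),
              ← Real.rpow_natCast (4:ℝ) (2*n+2)]
            congr 1
            push_cast
            ring
  -- step 4 : w 0 ≤ cM n
  have hw0 : w 0 ≤ cM n := by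
    have hpt : ∀ s ∈ Set.Icc (0:ℝ) 1, -W' s ≤ 1 := by
      intro s hs
      have h := negD_up hn hwd hwdd hFwc hFwpos hODEw hW'0 s 1 hs.1 (by norm_num)
        (fun σ hσ1 _ => Real.rpow_le_one (hgpos σ).le (hgle1 σ hσ1) hq1)
      calc -W' s ≤ 1 * s := h
        _ ≤ 1 := by linarith [hs.2]
    have hdiff := diff_up hwd hwdd (by norm_num : (0:ℝ) ≤ 1) hpt
    unfold cM
    push_cast at hdiff ⊢
    linarith [hw1, hdiff]
  -- step 5 : g (cRho n) ≥ 3/4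
  have hMpos : (0:ℝ) < cM n := by linarith [cM_pos n]
  have hρpos := cRho_pos n
  have hρ1 := cRho_le_one n
  have hgrho : 3/4 ≤ g (cRho n) := by
    have hK2 : ∀ σ, 0 ≤ σ → Fg σ ≤ cM n ^ 2 := by
      intro σ hσ
      have h1 : w σ ≤ cM n := le_trans (hwmono 0 σ le_rfl hσ) hw0
      calc Fg σ ≤ cM n ^ p := Real.rpow_le_rpow (hwpos σ).le h1 (by linarith)
        _ ≤ cM n ^ (2:ℝ) := Real.rpow_le_rpow_of_exponent_le (cM_pos n) (by linarith)
        _ = cM n ^ 2 := by rw [← Real.rpow_natCast (cM n) 2]; norm_num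
    have hpt : ∀ s ∈ Set.Icc (0:ℝ) (cRho n), -G' s ≤ cM n ^ 2 * cRho n := by
      intro s hs
      have h := negD_up hn hgd hgdd hFgc hFgpos hODEg hG'0 s (cM n ^ 2) hs.1
        (by positivity) (fun σ hσ1 _ => hK2 σ hσ1)
      calc -G' s ≤ cM n ^ 2 * s := h
        _ ≤ cM n ^ 2 * cRho n := by nlinarith [hs.2, sq_nonneg (cM n)]
    have hdiff := diff_up hgd hgdd hρpos.le hpt
    rw [hg0] at hdiff
    have hval : cM n ^ 2 * cRho n * (cRho n - 0) = 1/4 := by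
      unfold cRho
      field_simp
      ring
    rw [hval] at hdiff
    linarith
  -- step 6 : lower bound for the w-integral
  have hQlow : ∀ s, cRho n ≤ s → cA n ≤ ∫ σ in (0:ℝ)..s, σ ^ (n-1) * Fw σ := by
    intro s hs
    have hB : ∀ σ, cRho n / 2 ≤ σ → σ ≤ cRho n →
        (cRho n/2)^(n-1) * ((1/2:ℝ)^(4*n)) ≤ σ ^ (n-1) * Fw σ := by
      intro σ h1 h2
      have hσ0 : 0 ≤ σ := le_trans (by linarith) h1
      have hpow : (cRho n/2)^(n-1) ≤ σ ^ (n-1) := pow_le_pow_left₀ (by linarith) h1 _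
      have hg12 : (1/2:ℝ) ≤ g σ := by
        have := hgmono σ (cRho n) hσ0 h2
        linarith
      have hrq : ((1/2:ℝ))^(4*n) ≤ Fw σ := by
        calc ((1/2:ℝ))^(4*n) = (1/2:ℝ) ^ ((4*n : ℕ) : ℝ) := (Real.rpow_natCast _ _).symm
          _ ≤ (1/2:ℝ) ^ q := by
            apply Real.rpow_le_rpow_of_exponent_ge (by norm_num) (by norm_num)
            push_cast
            linarith
          _ ≤ g σ ^ q := Real.rpow_le_rpow (by norm_num) hg12 hq1
      exact mul_le_mul hpow hrq (by positivity) (pow_nonneg hσ0 _)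
    have hwin := int_low_window hn hFwc hFwpos s (cRho n)
      ((cRho n/2)^(n-1) * ((1/2:ℝ)^(4*n))) hρpos hs (by positivity) hB
    refine le_trans (le_of_eq ?_) hwin
    have hpow : (cRho n/2)^(n-1) * (cRho n/2) = (cRho n/2)^n := by
      rw [← pow_succ]
      congr 1
      omega
    unfold cA
    rw [← hpow]
    ring
  -- step 7 : w lower bound at radii ≥ ρ
  have hwlow : ∀ r', cRho n ≤ r' → cV n / r' ^ (n-2) ≤ w r' := by
    intro r' hr'
    have hr'pos : 0 < r' := lt_of_lt_of_le hρpos hr'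
    have hpt : ∀ s ∈ Set.Icc r' (2*r'), cA n / (2*r')^(n-1) ≤ -W' s := by
      intro s hs
      have hspos : 0 < s := lt_of_lt_of_le hr'pos hs.1
      rw [negD_rep hn hwd hwdd hFwc hODEw s hspos]
      have h1 : cA n ≤ ∫ σ in (0:ℝ)..s, σ^(n-1)*Fw σ := hQlow s (le_trans hr' hs.1)
      have h2 : s^(n-1) ≤ (2*r')^(n-1) := pow_le_pow_left₀ hspos.le hs.2 _
      calc cA n / (2*r')^(n-1) ≤ cA n / s^(n-1) :=
            my_div_le_div_left (cA_pos n).le (pow_pos hspos _) h2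
        _ ≤ (∫ σ in (0:ℝ)..s, σ^(n-1)*Fw σ) / s^(n-1) :=
            (div_le_div_iff_of_pos_right (pow_pos hspos _)).2 h1
    have hdiff := diff_low hwd hwdd (by linarith : r' ≤ 2*r') hpt
    have hw2 := hwpos (2*r')
    have halg : cA n / (2*r')^(n-1) * (2*r' - r') = cV n / r'^(n-2) := by
      unfold cV
      have he : (2*r')^(n-1) = 2^(n-1) * (r'^(n-2) * r') := by
        rw [mul_pow]
        congr 1
        rw [show n-1 = (n-2)+1 by omega, pow_succ]
      rw [he]
      field_simp
      ring
    rw [halg] at hdiff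
    linarith
  -- step 8 : final w bound
  have hwfinal : ∀ r, 0 ≤ r → cW n / (1 + r ^ ((n:ℝ) - 2)) ≤ w r := by
    intro r hr
    set r' := max r (cRho n) with hr'def
    have h1 : cRho n ≤ r' := le_max_right _ _
    have h2 : w r' ≤ w r := hwmono r r' hr (le_max_left _ _)
    have h3 := hwlow r' h1
    have hr'pos : 0 < r' := lt_of_lt_of_le hρpos h1
    have h4 : r' ≤ 1 + r := max_le (by linarith) (by linarith)
    have h5 : r' ^ (n-2) ≤ (1+r) ^ (n-2) := pow_le_pow_left₀ hr'pos.le h4 _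
    have h6 : (1+r) ^ (n-2) ≤ 2^(n-2) * (1 + r ^ (n-2)) := by
      rcases le_total r 1 with hc | hc
      · calc (1+r) ^ (n-2) ≤ 2 ^ (n-2) := pow_le_pow_left₀ (by linarith) (by linarith) _
          _ ≤ 2^(n-2) * (1 + r ^ (n-2)) := le_mul_of_one_le_right (by positivity)
              (by linarith [pow_nonneg hr (n-2)])
      · have hb : (1+r) ^ (n-2) ≤ (2*r) ^ (n-2) := pow_le_pow_left₀ (by linarith) (by linarith) _
        rw [mul_pow] at hb
        calc (1+r) ^ (n-2) ≤ 2^(n-2) * r^(n-2) := hb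
          _ ≤ 2^(n-2) * (1 + r ^ (n-2)) := by
              apply mul_le_mul_of_nonneg_left (by linarith) (by positivity)
    have hcast : r ^ ((n:ℝ)-2) = r ^ ((n-2 : ℕ)) := by
      rw [← Real.rpow_natCast r (n-2)]
      congr 1
      push_cast [Nat.cast_sub (show 2 ≤ n by omega)]
      ring
    rw [hcast]
    have h7 : cW n / (1 + r ^ (n-2:ℕ)) = cV n / (2^(n-2) * (1 + r ^ (n-2:ℕ))) := by
      unfold cW
      rw [div_div]
    rw [h7]
    have h8 : cV n / (2^(n-2) * (1 + r ^ (n-2:ℕ))) ≤ cV n / r' ^ (n-2) := by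
      apply my_div_le_div_left (cV_pos n).le (pow_pos hr'pos _)
      calc r' ^ (n-2) ≤ (1+r) ^ (n-2) := h5
        _ ≤ 2^(n-2) * (1 + r ^ (n-2)) := h6
    linarith
  -- step 9 : final g bound
  have hgfinal : ∀ r, 0 ≤ r → cUf n / (1 + r ^ γ) ≤ g r := by
    have hp0 : (0:ℝ) ≤ p := by linarith
    set κ : ℝ := ((n:ℝ) - 2) * p with hκdef
    have hκ0 : 0 ≤ κ := by nlinarith [hnR]
    have hκ2n : κ ≤ 2 * (n:ℝ) := by nlinarith [hnR]
    have hcV1 := cV_le_one n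
    have hcVpos := cV_pos n
    have hws : ∀ s, 2 ≤ s → cV n ^ 2 / s ^ κ ≤ w s ^ p := by
      intro s h2s
      have hspos : (0:ℝ) < s := by linarith
      have hwge : cV n / s ^ (n-2:ℕ) ≤ w s := hwlow s (by linarith)
      have hconv : (cV n / s ^ (n-2:ℕ)) ^ p = cV n ^ p / s ^ κ := by
        rw [Real.div_rpow hcVpos.le (pow_nonneg hspos.le _)]
        congr 1
        rw [← Real.rpow_natCast s (n-2), ← Real.rpow_mul hspos.le]
        congr 1
        push_cast [Nat.cast_sub (show 2 ≤ n by omega)]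
        ring
      have hmono : (cV n / s ^ (n-2:ℕ)) ^ p ≤ w s ^ p :=
        Real.rpow_le_rpow (by positivity) hwge hp0
      have hcVp : cV n ^ (2:ℝ) ≤ cV n ^ p :=
        Real.rpow_le_rpow_of_exponent_ge hcVpos hcV1 (by linarith)
      have hcV2 : cV n ^ (2:ℝ) = cV n ^ (2:ℕ) := by
        rw [← Real.rpow_natCast (cV n) 2]
        norm_num
      have hsκpos : 0 < s ^ κ := Real.rpow_pos_of_pos hspos κ
      calc cV n ^ 2 / s ^ κ ≤ cV n ^ p / s ^ κ := by
            apply (div_le_div_iff_of_pos_right hsκpos).2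
            rw [← hcV2]
            exact hcVp
        _ = (cV n / s ^ (n-2:ℕ)) ^ p := hconv.symm
        _ ≤ w s ^ p := hmono
    have hpt : ∀ s, 2 ≤ s → cV n ^2 * s / (2^n * s^κ) ≤ -G' s := by
      intro s h2s
      have hspos : (0:ℝ) < s := by linarith
      have hm0 : (0:ℝ) ≤ (s/2)^(n-1) * (cV n^2 / s^κ) := by
        have := (Real.rpow_pos_of_pos hspos κ)
        positivity
      have hB : ∀ σ, s/2 ≤ σ → σ ≤ s → (s/2)^(n-1) * (cV n^2/s^κ) ≤ σ^(n-1) * Fg σ := by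
        intro σ h1 h2
        have hσpos : (0:ℝ) < σ := by linarith
        have hp1' : (s/2)^(n-1) ≤ σ^(n-1) := pow_le_pow_left₀ (by linarith) h1 _
        have hwσ : w s ≤ w σ := hwmono σ s hσpos.le h2
        have hFσ : w s ^ p ≤ Fg σ := Real.rpow_le_rpow (hwpos s).le hwσ hp0
        have hw2 := hws s h2s
        have hq0 : (0:ℝ) ≤ cV n^2 / s^κ := by
          have := (Real.rpow_pos_of_pos hspos κ)
          positivity
        exact mul_le_mul hp1' (le_trans hw2 hFσ) hq0 (pow_nonneg hσpos.le _)
      have hkey := negD_low hn hgd hgdd hFgc hFgpos hODEg s _ hspos hm0 hB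
      refine le_trans (le_of_eq ?_) hkey
      have hsκ : s^κ ≠ 0 := (Real.rpow_pos_of_pos hspos κ).ne'
      have hsn : (s:ℝ)^(n-1) ≠ 0 := pow_ne_zero _ hspos.ne'
      have h2n : (2:ℝ)^n = 2^(n-1)*2 := by
        rw [← pow_succ]
        congr 1
        omega
      rw [div_pow, h2n]
      field_simp
    have hstep : ∀ r', 2 ≤ r' → cB n * r' ^ ((2:ℝ) - κ) ≤ g r' := by
      intro r' h2
      have hr'pos : (0:ℝ) < r' := by linarith
      have hptc : ∀ s ∈ Set.Icc r' (2*r'), cV n^2 * r' / (2^n * (2*r')^κ) ≤ -G' s := by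
        intro s hs
        have h2s : 2 ≤ s := le_trans h2 hs.1
        have hspos : (0:ℝ) < s := by linarith
        refine le_trans ?_ (hpt s h2s)
        have ha : s^κ ≤ (2*r')^κ := Real.rpow_le_rpow hspos.le hs.2 hκ0
        have hsκpos : 0 < s ^ κ := Real.rpow_pos_of_pos hspos κ
        apply div_le_div₀ (by positivity)
          (mul_le_mul_of_nonneg_left hs.1 (by positivity))
          (mul_pos (pow_pos two_pos n) hsκpos)
          (mul_le_mul_of_nonneg_left ha (by positivity))
      have hdiff := diff_low hgd hgdd (by linarith) hptc
      have hg2 := hgpos (2*r')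
      refine le_trans ?_ (by linarith : (cV n^2 * r' / (2^n * (2*r')^κ)) * (2*r' - r') ≤ g r')
      have hmul : (2*r')^κ = (2:ℝ)^κ * r'^κ := Real.mul_rpow (by norm_num) hr'pos.le
      have h2κ : (2:ℝ)^κ ≤ 2^(2*n:ℕ) := by
        rw [← Real.rpow_natCast 2 (2*n)]
        apply Real.rpow_le_rpow_of_exponent_le one_le_two
        push_cast
        linarith
      have hr2 : r' ^ ((2:ℝ) - κ) = r'^(2:ℕ) / r'^κ := by
        rw [Real.rpow_sub hr'pos]
        congr 1
        rw [← Real.rpow_natCast r' 2]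
        norm_num
      rw [hr2, hmul]
      have hrκpos : 0 < r'^κ := Real.rpow_pos_of_pos hr'pos κ
      have h2κpos : (0:ℝ) < (2:ℝ)^κ := Real.rpow_pos_of_pos two_pos κ
      have he : (cV n^2 * r' / (2^n * ((2:ℝ)^κ * r'^κ))) * (2*r' - r')
          = (cV n^2 /(2^n * (2:ℝ)^κ)) * (r'^(2:ℕ)/r'^κ) := by
        field_simp
        ring
      rw [he]
      unfold cB
      have hnum : cV n^2 / 2^n / 2^(2*n) ≤ cV n^2 / (2^n * (2:ℝ)^κ) := by
        rw [div_div]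
        apply my_div_le_div_left (by positivity) (by positivity)
        apply mul_le_mul_of_nonneg_left h2κ (by positivity)
      apply mul_le_mul_of_nonneg_right hnum
      positivity
    intro r hr
    set r'' := max r 2 with hr''def
    have h2 : (2:ℝ) ≤ r'' := le_max_right _ _
    have hgr : g r'' ≤ g r := hgmono r r'' hr (le_max_left _ _)
    have hst := hstep r'' h2
    have hr''pos : (0:ℝ) < r'' := by linarith
    have hcBpos := cB_pos n
    have hcUfpos := cUf_pos n
    have hrγ : (0:ℝ) ≤ r ^ γ := Real.rpow_nonneg hr γ
    have h1γpos : (0:ℝ) < 1 + r ^ γ := by linarith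
    rcases le_total r 2 with hc | hc
    · have he : r'' = 2 := max_eq_right hc
      rw [he] at hst
      have h2p : (2:ℝ) ^ (-(2*(n:ℝ))) ≤ (2:ℝ) ^ ((2:ℝ) - κ) :=
        Real.rpow_le_rpow_of_exponent_le one_le_two (by linarith)
      have hneg : (2:ℝ) ^ (-(2*(n:ℝ))) = 1/2^(2*n:ℕ) := by
        have hcast : ((2*n:ℕ):ℝ) = 2*(n:ℝ) := by push_cast; ring
        rw [← hcast, Real.rpow_neg two_pos.le, Real.rpow_natCast, one_div]
      have hfin : cUf n ≤ g 2 := by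
        unfold cUf
        calc cB n / 2^(2*n) = cB n * (1/2^(2*n:ℕ)) := by ring
          _ ≤ cB n * (2:ℝ) ^ ((2:ℝ)-κ) := by
              apply mul_le_mul_of_nonneg_left ?_ hcBpos.le
              rw [← hneg]
              exact h2p
          _ ≤ g 2 := hst
      calc cUf n / (1 + r^γ) ≤ cUf n / 1 := my_div_le_div_left hcUfpos.le one_pos (by linarith)
        _ = cUf n := div_one _
        _ ≤ g 2 := hfin
        _ ≤ g r := by rw [← he]; exact hgr
    · have he : r'' = r := max_eq_left hc
      rw [he] at hst
      have hrpos : (0:ℝ) < r := by linarith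
      have h1r : (1:ℝ) ≤ r := by linarith
      have hβ : r ^ ((2:ℝ) - κ) = 1 / r ^ (κ - 2) := by
        rw [show (2:ℝ)-κ = -(κ-2) by ring, Real.rpow_neg hrpos.le, one_div]
      have hmon : r ^ (κ-2) ≤ r ^ γ :=
        Real.rpow_le_rpow_of_exponent_le h1r (by rw [hκdef]; linarith)
      have hle : r ^ (κ-2) ≤ 1 + r^γ := by linarith
      have hrκ2pos : 0 < r ^ (κ-2) := Real.rpow_pos_of_pos hrpos _
      calc cUf n / (1 + r^γ) ≤ cB n / (1 + r^γ) := by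
            apply (div_le_div_iff_of_pos_right h1γpos).2
            unfold cUf
            exact div_le_self hcBpos.le (one_le_pow₀ one_le_two)
        _ ≤ cB n / r ^ (κ-2) := my_div_le_div_left hcBpos.le hrκ2pos hle
        _ = cB n * r ^ ((2:ℝ)-κ) := by rw [hβ]; ring
        _ ≤ g r := hst
  exact ⟨hgfinal, hwfinal⟩

end OneDim


set_option maxHeartbeats 2000000 in
theorem uniform_decay_lower_near_one (n : ℕ) (hn : 5 ≤ n) (η₂ : ℝ) (hη₂ : 0 < η₂) :
    ∃ ε₀ : ℝ, 0 < ε₀ ∧ ∃ C : ℝ, 0 < C ∧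
      ∀ p q : ℝ, 0 < p → 0 < q →
        1 / (p + 1) + 1 / (q + 1) = ((n : ℝ) - 2) / n →
        |p - 1| ≤ ε₀ →
        ∀ U V : EuclideanSpace ℝ (Fin n) → ℝ, IsGroundState n p q U V →
          (∀ x, C / (1 + ‖x‖ ^ ((n : ℝ) - 4 + η₂)) ≤ U x) ∧
          (∀ x, C / (1 + ‖x‖ ^ ((n : ℝ) - 2)) ≤ V x) := by
  have hN5 : (5:ℝ) ≤ (n:ℝ) := by exact_mod_cast hn
  set N : ℝ := (n:ℝ) with hNdef
  refine ⟨min (η₂/(N-2)) (min (1/4) ((N-4)/(4*N))), ?_, ?_⟩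
  · have h2 : (0:ℝ) < N - 2 := by linarith
    have h4 : (0:ℝ) < N - 4 := by linarith
    have hNpos : (0:ℝ) < N := by linarith
    exact lt_min (by positivity) (lt_min (by norm_num) (by positivity))
  refine ⟨min (OneDim.cUf n) (OneDim.cW n),
    lt_min (OneDim.cUf_pos n) (OneDim.cW_pos n), ?_⟩
  intro p q hp hq hyp hpe U V hGS
  obtain ⟨hU1, hV1, hUpos, hVpos, hPDEU, hPDEV, hUmono, hVmono, _, _, hU0⟩ := hGS
  -- ranges for p
  have hpe1 : |p - 1| ≤ 1/4 := le_trans hpe (le_trans (min_le_right _ _) (min_le_left _ _))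
  have hpeη : |p - 1| ≤ η₂/(N-2) := le_trans hpe (min_le_left _ _)
  have hpeN : |p - 1| ≤ (N-4)/(4*N) := le_trans hpe (le_trans (min_le_right _ _) (min_le_right _ _))
  rw [abs_le] at hpe1 hpeη hpeN
  have hp34 : 3/4 ≤ p := by linarith [hpe1.1]
  have hp54 : p ≤ 5/4 := by linarith [hpe1.2]
  -- q ≤ 4 n
  have hq4n : q ≤ 4*N := by
    have hp1pos : (0:ℝ) < p + 1 := by linarith
    have hq1pos : (0:ℝ) < q + 1 := by linarith
    set c : ℝ := (N-4)/(4*N) with hcdef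
    have hNpos : (0:ℝ) < N := by linarith
    have hc0 : 0 ≤ c := by
      rw [hcdef]
      apply div_nonneg (by linarith) (by linarith)
    have hc14 : c ≤ 1/4 := by
      rw [hcdef, div_le_div_iff₀ (by linarith) (by norm_num)]
      linarith
    have hpge : 1 - c ≤ p := by linarith [hpeN.1]
    have hA : 1/(p+1) ≤ 1/2 + c := by
      rw [div_le_iff₀ hp1pos]
      nlinarith [mul_le_mul_of_nonneg_left (show 2 - c ≤ p+1 by linarith)
        (show (0:ℝ) ≤ 1/2 + c by linarith), sq_nonneg c]
    have hB : c ≤ 1/(q+1) := by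
      have h2 : 1/(q+1) = (N-2)/N - 1/(p+1) := by linarith [hyp]
      rw [h2]
      have h3 : (N-2)/N - (1/2 + c) = c := by
        rw [hcdef]
        field_simp
        ring
      linarith
    have h4 : c * (q+1) ≤ 1 := by
      have h5 := mul_le_mul_of_nonneg_right hB hq1pos.le
      rwa [one_div, inv_mul_cancel₀ hq1pos.ne'] at h5
    have h4' : (N-4)*(q+1) ≤ 4*N := by
      rw [hcdef, div_mul_eq_mul_div, div_le_one (by linarith)] at h4
      linarith
    have h6 := mul_le_mul_of_nonneg_right (show (1:ℝ) ≤ N-4 by linarith) hq1pos.le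
    rw [one_mul] at h6
    linarith
  -- radial symmetry
  have hradU : ∀ x y : EuclideanSpace ℝ (Fin n), ‖x‖ = ‖y‖ → U x = U y :=
    fun x y h => le_antisymm (hUmono y x h.ge) (hUmono x y h.le)
  have hradV : ∀ x y : EuclideanSpace ℝ (Fin n), ‖x‖ = ‖y‖ → V x = V y :=
    fun x y h => le_antisymm (hVmono y x h.ge) (hVmono x y h.le)
  have hnpos : 0 < n := by omega
  set i0 : Fin n := ⟨0, hnpos⟩ with hi0
  set e : EuclideanSpace ℝ (Fin n) := RadialAux.ev n i0 with hedef
  have hnorme : ‖e‖ = 1 := RadialAux.norm_ev i0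
  have hnorm_smul : ∀ t : ℝ, ‖t • e‖ = |t| := by
    intro t
    rw [norm_smul, hnorme, mul_one, Real.norm_eq_abs]
  set g : ℝ → ℝ := fun t => U (t • e) with hgdef
  set w : ℝ → ℝ := fun t => V (t • e) with hwdef
  set G' : ℝ → ℝ := fun t => RadialAux.gd U i0 t with hG'def
  set G'' : ℝ → ℝ := fun t => RadialAux.gdd U i0 t with hG''def
  set W' : ℝ → ℝ := fun t => RadialAux.gd V i0 t with hW'def
  set W'' : ℝ → ℝ := fun t => RadialAux.gdd V i0 t with hW''def
  have hgd : ∀ t, HasDerivAt g (G' t) t := fun t => RadialAux.hasDerivAt_line hU1 i0 t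
  have hgdd : ∀ t, HasDerivAt G' (G'' t) t := fun t => RadialAux.hasDerivAt_gd hU1 i0 t
  have hwd : ∀ t, HasDerivAt w (W' t) t := fun t => RadialAux.hasDerivAt_line hV1 i0 t
  have hwdd : ∀ t, HasDerivAt W' (W'' t) t := fun t => RadialAux.hasDerivAt_gd hV1 i0 t
  have hgpos : ∀ t, 0 < g t := fun t => hUpos _
  have hwpos : ∀ t, 0 < w t := fun t => hVpos _
  have hgmono : ∀ s t, 0 ≤ s → s ≤ t → g t ≤ g s := by
    intro s t hs hst
    apply hUmono
    rw [hnorm_smul, hnorm_smul, abs_of_nonneg hs, abs_of_nonneg (hs.trans hst)]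
    exact hst
  have hwmono : ∀ s t, 0 ≤ s → s ≤ t → w t ≤ w s := by
    intro s t hs hst
    apply hVmono
    rw [hnorm_smul, hnorm_smul, abs_of_nonneg hs, abs_of_nonneg (hs.trans hst)]
    exact hst
  have hg0 : g 0 = 1 := by rw [hgdef]; simp only [zero_smul]; exact hU0
  -- evenness gives vanishing derivative at 0
  have heven : ∀ (f : ℝ → ℝ) (F' : ℝ → ℝ), (∀ t, f (-t) = f t) →
      (∀ t, HasDerivAt f (F' t) t) → F' 0 = 0 := by
    intro f F' hev hd
    have h1 : HasDerivAt (fun t => f (-t)) (F' (-(0:ℝ)) * (-1)) 0 :=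
      (hd (-(0:ℝ))).comp 0 (hasDerivAt_neg 0)
    have h2 : (fun t : ℝ => f (-t)) = f := funext hev
    rw [h2] at h1
    have := (hd 0).unique h1
    simp at this
    linarith [this]
  have hgev : ∀ t, g (-t) = g t := by
    intro t
    apply hradU
    rw [hnorm_smul, hnorm_smul, abs_neg]
  have hwev : ∀ t, w (-t) = w t := by
    intro t
    apply hradV
    rw [hnorm_smul, hnorm_smul, abs_neg]
  have hG'0 : G' 0 = 0 := heven g G' hgev hgd
  have hW'0 : W' 0 = 0 := heven w W' hwev hwd
  -- ODEs
  have hODEg : ∀ t, t ≠ 0 → G'' t + (N-1) * G' t / t = -(w t ^ p) := by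
    intro t ht
    have hlap := RadialAux.lap_radial hU1 hradU ht i0
    have hPDE := hPDEU (t • e)
    have : lap U (t • e) = -(V (t • e) ^ p) := by linarith [hPDE]
    rw [this] at hlap
    rw [hG''def, hG'def]
    linarith [hlap]
  have hODEw : ∀ t, t ≠ 0 → W'' t + (N-1) * W' t / t = -(g t ^ q) := by
    intro t ht
    have hlap := RadialAux.lap_radial hV1 hradV ht i0
    have hPDE := hPDEV (t • e)
    have : lap V (t • e) = -(U (t • e) ^ q) := by linarith [hPDE]
    rw [this] at hlap
    rw [hW''def, hW'def]
    linarith [hlap]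
  -- exponent condition
  have hβγ : (N-2) * p - 2 ≤ N - 4 + η₂ := by
    have h1 : p ≤ 1 + η₂/(N-2) := by linarith [hpeη.2]
    have h2 : (0:ℝ) < N - 2 := by linarith
    have h3 : (N-2) * p ≤ (N-2) * (1 + η₂/(N-2)) := by nlinarith
    have h4 : (N-2) * (1 + η₂/(N-2)) = N - 2 + η₂ := by field_simp
    linarith
  obtain ⟨hgfin, hwfin⟩ := OneDim.oneDim hn hp34 hp54 hq.le hq4n hgd hgdd hwd hwdd
    hgpos hwpos hgmono hwmono hg0 hG'0 hW'0 hODEg hODEw hβγ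
  constructor
  · intro x
    have hx : 0 ≤ ‖x‖ := norm_nonneg x
    have hUx : U x = g ‖x‖ := by
      apply hradU
      rw [hnorm_smul, abs_of_nonneg hx]
    rw [hUx]
    refine le_trans ?_ (hgfin ‖x‖ hx)
    have hpos : (0:ℝ) < 1 + ‖x‖ ^ (N - 4 + η₂) := by
      have := Real.rpow_nonneg hx (N - 4 + η₂)
      linarith
    exact (div_le_div_iff_of_pos_right hpos).2 (min_le_left _ _)
  · intro x
    have hx : 0 ≤ ‖x‖ := norm_nonneg x
    have hVx : V x = w ‖x‖ := by
      apply hradV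
      rw [hnorm_smul, abs_of_nonneg hx]
    rw [hVx]
    refine le_trans ?_ (hwfin ‖x‖ hx)
    have hpos : (0:ℝ) < 1 + ‖x‖ ^ (N - 2) := by
      have := Real.rpow_nonneg hx (N - 2)
      linarith
    exact (div_le_div_iff_of_pos_right hpos).2 (min_le_right _ _)
end
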